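/- Let m ∈ ℕ, let F, G : ℝ × ℝ^m → ℝ^m be continuously differentiable, let X₀ ∈ ℝ^m, T > 0 and κ₀ > 0. Assume Y : [0,T] → ℝ^m satisfies Y'(t) = F(t, Y(t)) with Y(0) = X₀, and that for every κ ∈ (0,κ₀] the map X_κ : [0,T] → ℝ^m satisfies X_κ'(t) = F(t, X_κ(t)) + κ·G(t, X_κ(t)) with X_κ(0) = X₀, all X_κ taking values in a fixed compact set. If moreover G(0, X₀) ≠ 0, then there exist c₂ > 0, t₀ ∈ (0,T] and κ₁ ∈ (0,κ₀] such that ‖X_κ(t) − Y(t)‖ ≥ c₂·κ·t for all t ∈ (0,t₀] and all κ ∈ (0,κ₁]. -/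

import Mathlib

open Real Set Metric
open scoped RealInnerProductSpace

/-- Auxiliary: `exp x * (1 - x) ≤ 1` for all `x`. -/
private lemma exp_mul_one_sub_le_one (x : ℝ) : Real.exp x * (1 - x) ≤ 1 := by
  have h1 : 1 - x ≤ Real.exp (-x) := by
    have := Real.add_one_le_exp (-x); linarith
  calc Real.exp x * (1 - x) ≤ Real.exp x * Real.exp (-x) := by
        apply mul_le_mul_of_nonneg_left h1 (Real.exp_pos x).le
    _ = 1 := by rw [← Real.exp_add]; simp

/-- Auxiliary bound on the Grönwall bound with `δ = 0`. -/
private lemma gronwallBound_le (L ε s T : ℝ) (hL : 0 ≤ L) (hε : 0 ≤ ε)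
    (hs : 0 ≤ s) (hsT : s ≤ T) :
    gronwallBound 0 L ε s ≤ ε * Real.exp (L * T) * s := by
  rcases eq_or_ne L 0 with h | h
  · subst h
    rw [gronwallBound_K0]
    simp only
    have h1 : (1:ℝ) ≤ Real.exp (0 * T) := by simp
    nlinarith [mul_nonneg hε hs, mul_nonneg (mul_nonneg hε hs) (by linarith : (0:ℝ) ≤ Real.exp (0 * T) - 1)]
  · rw [gronwallBound_of_K_ne_0 h]
    have hL' : 0 < L := lt_of_le_of_ne hL (Ne.symm h)
    simp only
    rw [zero_mul, zero_add, div_mul_eq_mul_div, div_le_iff₀ hL']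
    have key : Real.exp (L * s) - 1 ≤ L * s * Real.exp (L * s) := by
      have := exp_mul_one_sub_le_one (L * s); nlinarith
    have hexp : Real.exp (L * s) ≤ Real.exp (L * T) := by
      apply Real.exp_le_exp.mpr; nlinarith
    have h1 : L * s * Real.exp (L * s) ≤ L * s * Real.exp (L * T) := by
      apply mul_le_mul_of_nonneg_left hexp; positivity
    nlinarith

set_option maxHeartbeats 1000000 in
/-- If `G(0,X₀) ≠ 0`, the perturbed trajectory separates from the unperturbed one
at linear rate `c₂ κ t` for small times and small `κ`. -/
theorem stmt_1 (m : ℕ)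
    (F G : ℝ × EuclideanSpace ℝ (Fin m) → EuclideanSpace ℝ (Fin m))
    (hF : ContDiff ℝ 1 F) (hG : ContDiff ℝ 1 G)
    (X₀ : EuclideanSpace ℝ (Fin m)) (T κ₀ : ℝ) (hT : 0 < T) (hκ₀ : 0 < κ₀)
    (Y : ℝ → EuclideanSpace ℝ (Fin m))
    (hY : ∀ t ∈ Set.Icc (0:ℝ) T, HasDerivAt Y (F (t, Y t)) t)
    (hY0 : Y 0 = X₀)
    (X : ℝ → ℝ → EuclideanSpace ℝ (Fin m))
    (hX : ∀ κ ∈ Set.Ioc (0:ℝ) κ₀, ∀ t ∈ Set.Icc (0:ℝ) T,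
      HasDerivAt (X κ) (F (t, X κ t) + κ • G (t, X κ t)) t)
    (hX0 : ∀ κ ∈ Set.Ioc (0:ℝ) κ₀, X κ 0 = X₀)
    (K : Set (EuclideanSpace ℝ (Fin m))) (hK : IsCompact K)
    (hXK : ∀ κ ∈ Set.Ioc (0:ℝ) κ₀, ∀ t ∈ Set.Icc (0:ℝ) T, X κ t ∈ K)
    (hG0 : G (0, X₀) ≠ 0) :
    ∃ c₂ > (0:ℝ), ∃ t₀ ∈ Set.Ioc (0:ℝ) T, ∃ κ₁ ∈ Set.Ioc (0:ℝ) κ₀,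
      ∀ t ∈ Set.Ioc (0:ℝ) t₀, ∀ κ ∈ Set.Ioc (0:ℝ) κ₁,
        c₂ * κ * t ≤ ‖X κ t - Y t‖ := by
  classical
  set g := G (0, X₀) with hgdef
  have hg : 0 < ‖g‖ := norm_pos_iff.mpr hG0
  -- continuity of Y and of the solutions
  have hYc : ContinuousOn Y (Icc 0 T) := fun t ht =>
    (hY t ht).continuousAt.continuousWithinAt
  have hXc : ∀ κ ∈ Set.Ioc (0:ℝ) κ₀, ContinuousOn (X κ) (Icc 0 T) := fun κ hκ t ht =>
    (hX κ hκ t ht).continuousAt.continuousWithinAt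
  -- big compact set of values
  set K' : Set (EuclideanSpace ℝ (Fin m)) := K ∪ (Y '' Icc 0 T) with hK'def
  have hK' : IsCompact K' := hK.union (isCompact_Icc.image_of_continuousOn hYc)
  have hS : IsCompact ((Icc (0:ℝ) T) ×ˢ K') := isCompact_Icc.prod hK'
  obtain ⟨r, hr⟩ := hS.isBounded.subset_closedBall 0
  set B : Set (ℝ × EuclideanSpace ℝ (Fin m)) := Metric.closedBall 0 r with hBdef
  have hBc : IsCompact B := isCompact_closedBall _ _
  have hBconv : Convex ℝ B := convex_closedBall _ _
  have hmemB : ∀ s ∈ Icc (0:ℝ) T, ∀ x ∈ K', (s, x) ∈ B := fun s hs x hx =>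
    hr (Set.mk_mem_prod hs hx)
  -- membership of trajectory points
  have hXmem : ∀ κ ∈ Set.Ioc (0:ℝ) κ₀, ∀ s ∈ Icc (0:ℝ) T, (s, X κ s) ∈ B :=
    fun κ hκ s hs => hmemB s hs _ (Or.inl (hXK κ hκ s hs))
  have hYmem : ∀ s ∈ Icc (0:ℝ) T, (s, Y s) ∈ B :=
    fun s hs => hmemB s hs _ (Or.inr ⟨s, hs, rfl⟩)
  -- Lipschitz constant for F on B
  obtain ⟨L₀, hL₀⟩ := hBc.exists_bound_of_continuousOn
    ((hF.continuous_fderiv one_ne_zero).continuousOn)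
  set L : ℝ := max L₀ 0 with hLdef
  have hL0 : 0 ≤ L := le_max_right _ _
  have hFlip : LipschitzOnWith L.toNNReal F B := by
    apply Convex.lipschitzOnWith_of_nnnorm_fderiv_le
      (fun x _ => (hF.differentiable one_ne_zero).differentiableAt) _ hBconv
    intro x hx
    rw [← NNReal.coe_le_coe, coe_nnnorm, Real.coe_toNNReal _ hL0]
    exact le_trans (hL₀ x hx) (le_max_left _ _)
  have hFlip' : ∀ κ ∈ Set.Ioc (0:ℝ) κ₀, ∀ s ∈ Icc (0:ℝ) T,
      ‖F (s, X κ s) - F (s, Y s)‖ ≤ L * ‖X κ s - Y s‖ := by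
    intro κ hκ s hs
    have h1 := hFlip.dist_le_mul _ (hXmem κ hκ s hs) _ (hYmem s hs)
    rw [dist_eq_norm] at h1
    refine h1.trans ?_
    rw [Prod.dist_eq]
    simp only [dist_self, dist_eq_norm]
    rw [max_eq_right (norm_nonneg _ : (0:ℝ) ≤ ‖X κ s - Y s‖)]
    gcongr
    rw [Real.coe_toNNReal _ hL0]
  -- uniform bounds on F and G
  obtain ⟨MF₀, hMF₀⟩ := hBc.exists_bound_of_continuousOn hF.continuous.continuousOn
  obtain ⟨MG₀, hMG₀⟩ := hBc.exists_bound_of_continuousOn hG.continuous.continuousOn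
  set MF : ℝ := max MF₀ 0 with hMFdef
  set MG : ℝ := max MG₀ 0 with hMGdef
  have hMF0 : 0 ≤ MF := le_max_right _ _
  have hMG0 : 0 ≤ MG := le_max_right _ _
  have hMF : ∀ p ∈ B, ‖F p‖ ≤ MF := fun p hp => (hMF₀ p hp).trans (le_max_left _ _)
  have hMG : ∀ p ∈ B, ‖G p‖ ≤ MG := fun p hp => (hMG₀ p hp).trans (le_max_left _ _)
  set MX : ℝ := MF + κ₀ * MG with hMXdef
  have hMX0 : 0 ≤ MX := by positivity
  -- upper bound ‖X κ s - X₀‖ ≤ MX * s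
  have hXnear : ∀ κ ∈ Set.Ioc (0:ℝ) κ₀, ∀ s ∈ Icc (0:ℝ) T, ‖X κ s - X₀‖ ≤ MX * s := by
    intro κ hκ s hs
    have hgr := norm_le_gronwallBound_of_norm_deriv_right_le
      (f := fun s => X κ s - X₀)
      (f' := fun s => F (s, X κ s) + κ • G (s, X κ s)) (δ := 0) (K := 0) (ε := MX)
      (a := 0) (b := T)
      (((hXc κ hκ).sub continuousOn_const))
      (fun x hx => ((hX κ hκ x (Ico_subset_Icc_self hx)).sub_const
        X₀).hasDerivWithinAt)
      (by simp [hX0 κ hκ])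
      ?_ s hs
    · rw [gronwallBound_K0] at hgr
      simpa using hgr
    · intro x hx
      have hx' := Ico_subset_Icc_self hx
      simp only [zero_mul, zero_add]
      refine (norm_add_le _ _).trans ?_
      rw [hMXdef]
      gcongr
      · exact hMF _ (hXmem κ hκ x hx')
      · rw [norm_smul, Real.norm_eq_abs, abs_of_pos hκ.1]
        have h2 := hMG _ (hXmem κ hκ x hx')
        nlinarith [hκ.1.le, hκ.2, norm_nonneg (G (x, X κ x))]
  -- the key Grönwall bound: ‖X κ s - Y s‖ ≤ κ * C * s
  set C : ℝ := MG * Real.exp (L * T) with hCdef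
  have hC0 : 0 ≤ C := by positivity
  have hDbound : ∀ κ ∈ Set.Ioc (0:ℝ) κ₀, ∀ s ∈ Icc (0:ℝ) T,
      ‖X κ s - Y s‖ ≤ κ * C * s := by
    intro κ hκ s hs
    have hgr := norm_le_gronwallBound_of_norm_deriv_right_le
      (f := fun s => X κ s - Y s)
      (f' := fun s => (F (s, X κ s) + κ • G (s, X κ s)) - F (s, Y s))
      (δ := 0) (K := L) (ε := κ * MG) (a := 0) (b := T)
      ((hXc κ hκ).sub hYc)
      (fun x hx => ((hX κ hκ x (Ico_subset_Icc_self hx)).sub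
        (hY x (Ico_subset_Icc_self hx))).hasDerivWithinAt)
      (by simp [hX0 κ hκ, hY0])
      ?_ s hs
    · have hb := gronwallBound_le L (κ * MG) (s - 0) T hL0
        (by nlinarith [hκ.1.le, hMG0]) (by simpa using hs.1) (by simpa using hs.2)
      calc ‖X κ s - Y s‖ ≤ gronwallBound 0 L (κ * MG) (s - 0) := hgr
        _ ≤ κ * MG * Real.exp (L * T) * (s - 0) := hb
        _ = κ * C * s := by rw [hCdef]; ring
    · intro x hx
      have hx' := Ico_subset_Icc_self hx
      have hre : (F (x, X κ x) + κ • G (x, X κ x)) - F (x, Y x)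
          = (F (x, X κ x) - F (x, Y x)) + κ • G (x, X κ x) := by abel
      rw [hre]
      refine (norm_add_le _ _).trans ?_
      have h1 := hFlip' κ hκ x hx'
      have h2 : ‖κ • G (x, X κ x)‖ ≤ κ * MG := by
        rw [norm_smul, Real.norm_eq_abs, abs_of_pos hκ.1]
        exact mul_le_mul_of_nonneg_left (hMG _ (hXmem κ hκ x hx')) hκ.1.le
      linarith
  -- continuity of G at (0, X₀)
  obtain ⟨δ, hδ0, hδ⟩ := Metric.continuousAt_iff.mp hG.continuous.continuousAt
    (‖g‖ / 4) (by positivity)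
  -- choice of t₀
  have h1MX : (0:ℝ) < 2 * (1 + MX) := by linarith
  have h4LC : (0:ℝ) < 4 * (L + 1) * (C + 1) := by nlinarith [mul_nonneg hL0 hC0]
  set t₀ : ℝ := min T (min (δ / (2 * (1 + MX))) (‖g‖ / (4 * (L + 1) * (C + 1)))) with ht₀def
  have ht₀0 : 0 < t₀ :=
    lt_min hT (lt_min (div_pos hδ0 h1MX) (div_pos hg h4LC))
  have ht₀T : t₀ ≤ T := min_le_left _ _
  have ht₀δ : t₀ ≤ δ / (2 * (1 + MX)) := (min_le_right _ _).trans (min_le_left _ _)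
  have ht₀g : t₀ ≤ ‖g‖ / (4 * (L + 1) * (C + 1)) :=
    (min_le_right _ _).trans (min_le_right _ _)
  -- G is near g along the trajectory for small times
  have hGnear : ∀ κ ∈ Set.Ioc (0:ℝ) κ₀, ∀ s ∈ Icc (0:ℝ) t₀,
      ‖G (s, X κ s) - g‖ ≤ ‖g‖ / 4 := by
    intro κ hκ s hs
    have hsT : s ∈ Icc (0:ℝ) T := ⟨hs.1, hs.2.trans ht₀T⟩
    have hdist : dist (s, X κ s) ((0:ℝ), X₀) < δ := by
      rw [Prod.dist_eq]
      have h1 : dist s 0 < δ := by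
        rw [Real.dist_eq, sub_zero, abs_of_nonneg hs.1]
        calc s ≤ t₀ := hs.2
          _ ≤ δ / (2 * (1 + MX)) := ht₀δ
          _ < δ := by
            rw [div_lt_iff₀ h1MX]
            nlinarith [hδ0]
      have h2 : dist (X κ s) X₀ < δ := by
        rw [dist_eq_norm]
        calc ‖X κ s - X₀‖ ≤ MX * s := hXnear κ hκ s hsT
          _ ≤ MX * t₀ := by gcongr; exact hs.2
          _ ≤ MX * (δ / (2 * (1 + MX))) := by gcongr
          _ < δ := by
            rw [mul_div_assoc', div_lt_iff₀ h1MX]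
            nlinarith [hδ0]
      exact max_lt h1 h2
    have hd := hδ hdist
    rw [dist_eq_norm] at hd
    exact hd.le
  -- conclusion
  refine ⟨‖g‖ / 2, by positivity, t₀, ⟨ht₀0, ht₀T⟩, κ₀, ⟨hκ₀, le_rfl⟩, ?_⟩
  intro t ht κ hκ
  have htT : t ∈ Icc (0:ℝ) T := ⟨ht.1.le, ht.2.trans ht₀T⟩
  have hκ0' : (0:ℝ) ≤ κ := hκ.1.le
  -- the function φ s = ⟪g, X κ s - Y s⟫
  set D : ℝ → EuclideanSpace ℝ (Fin m) := fun s => X κ s - Y s with hDdef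
  set φ : ℝ → ℝ := fun s => ⟪g, D s⟫ with hφdef
  have hDderiv : ∀ s ∈ Icc (0:ℝ) T,
      HasDerivAt D ((F (s, X κ s) + κ • G (s, X κ s)) - F (s, Y s)) s :=
    fun s hs => (hX κ hκ s hs).sub (hY s hs)
  have hφderiv : ∀ s ∈ Icc (0:ℝ) T,
      HasDerivAt φ ⟪g, (F (s, X κ s) + κ • G (s, X κ s)) - F (s, Y s)⟫ s := by
    intro s hs
    have h := HasDerivAt.inner ℝ (hasDerivAt_const s g) (hDderiv s hs)
    simpa only [inner_zero_left, add_zero] using h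
  -- lower bound for the derivative of φ on [0, t]
  have hφ' : ∀ s ∈ Icc (0:ℝ) t,
      κ * (‖g‖^2 / 2) ≤ ⟪g, (F (s, X κ s) + κ • G (s, X κ s)) - F (s, Y s)⟫ := by
    intro s hs
    have hsT : s ∈ Icc (0:ℝ) T := ⟨hs.1, hs.2.trans (ht.2.trans ht₀T)⟩
    have hst₀ : s ∈ Icc (0:ℝ) t₀ := ⟨hs.1, hs.2.trans ht.2⟩
    have hre : (F (s, X κ s) + κ • G (s, X κ s)) - F (s, Y s)
        = (F (s, X κ s) - F (s, Y s)) + κ • g + κ • (G (s, X κ s) - g) := by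
      rw [smul_sub]; abel
    rw [hre, inner_add_right, inner_add_right, real_inner_smul_right,
      real_inner_smul_right, real_inner_self_eq_norm_sq]
    have hb1 : -(‖g‖ * (L * (κ * C * s))) ≤ ⟪g, F (s, X κ s) - F (s, Y s)⟫ := by
      have h1 : |⟪g, F (s, X κ s) - F (s, Y s)⟫| ≤ ‖g‖ * ‖F (s, X κ s) - F (s, Y s)‖ :=
        abs_real_inner_le_norm _ _
      have h2 : ‖F (s, X κ s) - F (s, Y s)‖ ≤ L * (κ * C * s) :=
        (hFlip' κ hκ s hsT).trans
          (mul_le_mul_of_nonneg_left (hDbound κ hκ s hsT) hL0)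
      have h3 : ‖g‖ * ‖F (s, X κ s) - F (s, Y s)‖ ≤ ‖g‖ * (L * (κ * C * s)) := by
        gcongr
      have h4 := (abs_le.mp h1).1
      linarith
    have hb2 : -(‖g‖ * (‖g‖/4)) ≤ ⟪g, G (s, X κ s) - g⟫ := by
      have h1 : |⟪g, G (s, X κ s) - g⟫| ≤ ‖g‖ * ‖G (s, X κ s) - g‖ :=
        abs_real_inner_le_norm _ _
      have h2 := hGnear κ hκ s hst₀
      have h3 : ‖g‖ * ‖G (s, X κ s) - g‖ ≤ ‖g‖ * (‖g‖/4) := by gcongr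
      have h4 := (abs_le.mp h1).1
      linarith
    have hLCs : L * C * s ≤ ‖g‖ / 4 := by
      calc L * C * s ≤ (L+1) * (C+1) * t₀ := by
            have hs2 : s ≤ t₀ := hst₀.2
            nlinarith [hst₀.1, hL0, hC0, ht₀0.le]
        _ ≤ (L+1) * (C+1) * (‖g‖ / (4 * (L + 1) * (C + 1))) := by
            gcongr
        _ = ‖g‖ / 4 := by field_simp
    have h4 : ‖g‖ * (L * (κ * C * s)) ≤ κ * (‖g‖^2/4) := by
      have h5 : ‖g‖ * (L * C * s) ≤ ‖g‖ * (‖g‖/4) :=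
        mul_le_mul_of_nonneg_left hLCs (norm_nonneg g)
      nlinarith [norm_nonneg g]
    nlinarith [hb1, hb2, h4, mul_nonneg hκ0' (norm_nonneg g)]
  -- integrate the bound: φ t ≥ κ * (‖g‖²/2) * t
  have hmono : φ 0 - κ * (‖g‖^2/2) * 0 ≤ φ t - κ * (‖g‖^2/2) * t := by
    set ψ : ℝ → ℝ := fun s => φ s - κ * (‖g‖^2/2) * s with hψdef
    have hψderiv : ∀ s ∈ Icc (0:ℝ) t, HasDerivAt ψ
        (⟪g, (F (s, X κ s) + κ • G (s, X κ s)) - F (s, Y s)⟫ - κ * (‖g‖^2/2)) s := by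
      intro s hs
      have hsT : s ∈ Icc (0:ℝ) T := ⟨hs.1, hs.2.trans (ht.2.trans ht₀T)⟩
      have hlin : HasDerivAt (fun s : ℝ => κ * (‖g‖^2/2) * s) (κ * (‖g‖^2/2)) s := by
        simpa using (hasDerivAt_id s).const_mul (κ * (‖g‖^2/2))
      exact (hφderiv s hsT).sub hlin
    have hm : MonotoneOn ψ (Icc 0 t) := by
      apply monotoneOn_of_deriv_nonneg (convex_Icc 0 t)
      · exact fun s hs => (hψderiv s hs).continuousAt.continuousWithinAt
      · intro s hs
        rw [interior_Icc] at hs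
        exact ((hψderiv s (Ioo_subset_Icc_self hs)).differentiableAt).differentiableWithinAt
      · intro s hs
        rw [interior_Icc] at hs
        rw [(hψderiv s (Ioo_subset_Icc_self hs)).deriv]
        have := hφ' s (Ioo_subset_Icc_self hs)
        linarith
    exact hm (left_mem_Icc.mpr ht.1.le) (right_mem_Icc.mpr ht.1.le) ht.1.le
  have hφ0 : φ 0 = 0 := by
    simp [hφdef, hDdef, hX0 κ hκ, hY0]
  have hφt : κ * (‖g‖^2/2) * t ≤ φ t := by
    rw [hφ0] at hmono
    simpa using hmono
  -- finish with Cauchy–Schwarz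
  have hCS : φ t ≤ ‖g‖ * ‖D t‖ := real_inner_le_norm g (D t)
  have hfinal : κ * (‖g‖^2/2) * t ≤ ‖g‖ * ‖D t‖ := hφt.trans hCS
  have h2 : ‖g‖ * (‖g‖ / 2 * κ * t) ≤ ‖g‖ * ‖D t‖ := by nlinarith
  exact le_of_mul_le_mul_left h2 hg
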